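/- Let N be a positive integer, s ≥ 1 an integer, and W : ℤ → ℤ/Nℤ an s-periodic bi-infinite word, i.e. W(i + s) = W(i) for all i ∈ ℤ. Then there exists a positive integer t such that for every integer l ≥ 1 and every i ∈ ℤ, the subword W(i) W(i+1) … W(i + l·t·s − 2) of length l·t·s − 1 lies in Ā. -/
import Mathlib


/-- The monoid homomorphism π sending a word α₁…α_l over ℤ/Nℤ to the matrix product
[[0,1],[−1,α₁]] ⋯ [[0,1],[−1,α_l]]. -/
def piWordN (N : ℕ) (w : List (ZMod N)) : Matrix (Fin 2) (Fin 2) (ZMod N) :=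
  (w.map fun α => !![0, 1; -1, α]).prod

/-- Ā : the words whose image under π has (2,2)-entry equal to 0. -/
def Abar (N : ℕ) : Set (List (ZMod N)) :=
  {w | piWordN N w 1 1 = 0}

/-- The letter matrix as a unit of the matrix ring. -/
def uMat (N : ℕ) (α : ZMod N) : (Matrix (Fin 2) (Fin 2) (ZMod N))ˣ where
  val := !![0, 1; -1, α]
  inv := !![α, -1; 1, 0]
  val_inv := by
    ext i j
    fin_cases i <;> fin_cases j <;>
      simp [Matrix.mul_apply, Fin.sum_univ_two, Matrix.one_apply]
  inv_val := by
    ext i j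
    fin_cases i <;> fin_cases j <;>
      simp [Matrix.mul_apply, Fin.sum_univ_two, Matrix.one_apply]

theorem stmt19 (N : ℕ) (hN : 0 < N) (s : ℕ) (hs : 1 ≤ s)
    (W : ℤ → ZMod N) (hper : ∀ i : ℤ, W (i + s) = W i) :
    ∃ t : ℕ, 0 < t ∧ ∀ l : ℕ, 1 ≤ l → ∀ i : ℤ,
      ((List.range (l * t * s - 1)).map fun j => W (i + j)) ∈ Abar N := by
  haveI : NeZero N := ⟨hN.ne'⟩
  set u : ZMod N → (Matrix (Fin 2) (Fin 2) (ZMod N))ˣ := uMat N with hu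
  set P : ℤ → (Matrix (Fin 2) (Fin 2) (ZMod N))ˣ :=
    fun i => ((List.range s).map fun j : ℕ => u (W (i + (j:ℤ)))).prod with hP
  have Pshift : ∀ i : ℤ, P (i + (s : ℤ)) = P i := by
    intro i
    simp only [hP]
    congr 1
    apply List.map_congr_left
    intro j _
    have h : i + (s : ℤ) + (j : ℤ) = (i + (j:ℤ)) + (s:ℤ) := by ring
    rw [h, hper]
  have key : ∀ (k : ℕ) (i : ℤ),
      ((List.range (k * s)).map fun j : ℕ => u (W (i + (j:ℤ)))).prod = (P i) ^ k := by
    intro k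
    induction k with
    | zero => intro i; simp
    | succ k ih =>
      intro i
      have hks : (k + 1) * s = s + k * s := by ring
      rw [hks, List.range_add, List.map_append, List.prod_append, pow_succ']
      congr 1
      rw [List.map_map]
      have hfun : ((fun j : ℕ => u (W (i + (j:ℤ)))) ∘ (s + ·)) =
          fun j : ℕ => u (W ((i + (s : ℤ)) + (j:ℤ))) := by
        funext j
        simp only [Function.comp]
        congr 2
        push_cast
        ring
      rw [hfun, ih (i + (s : ℤ)), Pshift]
  refine ⟨Fintype.card (Matrix (Fin 2) (Fin 2) (ZMod N))ˣ, Fintype.card_pos, ?_⟩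
  intro l hl i
  set t := Fintype.card (Matrix (Fin 2) (Fin 2) (ZMod N))ˣ with ht
  set n := l * t * s - 1 with hn
  have hpos : 0 < l * t * s :=
    Nat.mul_pos (Nat.mul_pos hl Fintype.card_pos) hs
  have hlen : n + 1 = l * t * s := Nat.succ_pred_eq_of_pos hpos
  have hfull : ((List.range (n + 1)).map fun j : ℕ => u (W (i + (j:ℤ)))).prod = 1 := by
    rw [hlen, key (l * t) i, pow_mul, pow_card_eq_one]
  have hsplit : ((List.range n).map fun j : ℕ => u (W (i + (j:ℤ)))).prod * u (W (i + n)) = 1 := by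
    rw [List.range_succ, List.map_append, List.prod_append] at hfull
    simpa using hfull
  have hinv : ((List.range n).map fun j : ℕ => u (W (i + (j:ℤ)))).prod = (u (W (i + n)))⁻¹ :=
    eq_inv_of_mul_eq_one_left hsplit
  simp only [Abar, Set.mem_setOf_eq, bind_pure_comp, List.map_eq_map, List.map_map]
  show piWordN N ((List.range n).map fun j : ℕ => W (i + (j:ℤ))) 1 1 = 0
  have hcoe : piWordN N ((List.range n).map fun j : ℕ => W (i + (j:ℤ))) =
      (Units.coeHom (Matrix (Fin 2) (Fin 2) (ZMod N)))
        (((List.range n).map fun j : ℕ => u (W (i + (j:ℤ)))).prod) := by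
    rw [piWordN, List.map_map, map_list_prod, List.map_map]
    rfl
  rw [hcoe, Units.coeHom_apply, hinv]
  show (!![W (i + (n:ℤ)), -1; 1, 0] : Matrix (Fin 2) (Fin 2) (ZMod N)) 1 1 = 0
  simp
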